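/- Let q : ℝ × ℝ → ℝ be real-valued with q(·, t) integrable on ℝ for each t, and set U(y,t) := [[0, q(y,t)],[q(−y,−t), 0]]. Suppose Ψ : ℝ × ℝ × ℝ → M₂(ℂ) is bounded, continuous and satisfies the Volterra integral equation Ψ(x,t,k) = I + ∫_{−∞}^{x} e^{ik(y−x)σ̂₃}( U(y,t) Ψ(y,t,k) ) dy for all x, t ∈ ℝ and k ∈ ℝ. Then the function Ψ̃(x,t,k) := Λ · conj( Ψ(−x, −t, −k) ) · Λ⁻¹ satisfies the companion Volterra equation Ψ̃(x,t,k) = I − ∫_{x}^{∞} e^{ik(y−x)σ̂₃}( U(y,t) Ψ̃(y,t,k) ) dy for all x, t ∈ ℝ and k ∈ ℝ. (This is the symmetry, used in (2.9), that if Ψ solves (2.4a) then Λ·conj(Ψ(−x,−t,−k̄))·Λ⁻¹ solves (2.4b); for k ∈ ℝ, −k̄ = −k. The reality of q is the implicit reduction under which this conjugation symmetry holds.) -/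

import Mathlib

open Matrix MeasureTheory Set

noncomputable section

/-- Λ = [[0,-1],[1,0]]. -/
def Lam : Matrix (Fin 2) (Fin 2) ℂ := !![0, -1; 1, 0]

/-- Λ⁻¹ = [[0,1],[-1,0]]. -/
def LamInv : Matrix (Fin 2) (Fin 2) ℂ := !![0, 1; -1, 0]

/-- `e^{θσ̂₃}A = e^{θσ₃} A e^{-θσ₃}`: the (1,2)-entry is multiplied by `e^{2θ}`
and the (2,1)-entry by `e^{-2θ}`. -/
def sigma3Conj (θ : ℂ) (A : Matrix (Fin 2) (Fin 2) ℂ) : Matrix (Fin 2) (Fin 2) ℂ :=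
  !![A 0 0, Complex.exp (2 * θ) * A 0 1; Complex.exp (-(2 * θ)) * A 1 0, A 1 1]

/-- U(y,t) for real-valued q. -/
def Umat (q : ℝ → ℝ → ℝ) (y t : ℝ) : Matrix (Fin 2) (Fin 2) ℂ :=
  !![0, (q y t : ℂ); (q (-y) (-t) : ℂ), 0]

/-- Ψ̃(x,t,k) = Λ conj(Ψ(-x,-t,-k)) Λ⁻¹. -/
def PsiTilde (Ψ : ℝ → ℝ → ℝ → Matrix (Fin 2) (Fin 2) ℂ) (x t k : ℝ) :
    Matrix (Fin 2) (Fin 2) ℂ :=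
  Lam * (Matrix.of fun i j => starRingEnd ℂ (Ψ (-x) (-t) (-k) i j)) * LamInv

/-- The conjugation symmetry used in (2.9): if Ψ solves the Volterra equation
(2.4a) then Λ·conj(Ψ(-x,-t,-k))·Λ⁻¹ solves the companion equation (2.4b). -/
theorem volterra_conj_symmetry (q : ℝ → ℝ → ℝ)
    (hint : ∀ t : ℝ, Integrable (fun y => q y t))
    (Ψ : ℝ → ℝ → ℝ → Matrix (Fin 2) (Fin 2) ℂ)
    (hbdd : ∃ M : ℝ, ∀ (x t k : ℝ) (i j : Fin 2), ‖Ψ x t k i j‖ ≤ M)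
    (hcont : ∀ i j : Fin 2, Continuous fun p : ℝ × ℝ × ℝ => Ψ p.1 p.2.1 p.2.2 i j)
    (hvolt : ∀ (x t k : ℝ) (i j : Fin 2),
      Ψ x t k i j = (1 : Matrix (Fin 2) (Fin 2) ℂ) i j +
        ∫ y in Iic x, (sigma3Conj (Complex.I * (k : ℂ) * ((y : ℂ) - (x : ℂ)))
          (Umat q y t * Ψ y t k)) i j) :
    ∀ (x t k : ℝ) (i j : Fin 2),
      PsiTilde Ψ x t k i j = (1 : Matrix (Fin 2) (Fin 2) ℂ) i j -
        ∫ y in Ici x, (sigma3Conj (Complex.I * (k : ℂ) * ((y : ℂ) - (x : ℂ)))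
          (Umat q y t * PsiTilde Ψ y t k)) i j := by
  intro x t k i j
  have key : ∀ F : ℝ → ℂ, ∫ y in Iic (-x), F y = ∫ y in Ici x, F (-y) := fun F => by
    rw [integral_Ici_eq_integral_Ioi, integral_comp_neg_Ioi]
  fin_cases i <;> fin_cases j
  · have H := hvolt (-x) (-t) (-k) 1 1
    simp only [Fin.mk_zero, Fin.mk_one, sigma3Conj, Umat, PsiTilde, Lam, LamInv, Matrix.mul_apply, Fin.sum_univ_two,
      Matrix.cons_val_zero, Matrix.cons_val_one, Matrix.head_cons, Matrix.head_fin_const,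
      Matrix.of_apply, Matrix.one_apply, if_true, if_false, zero_mul, mul_zero, add_zero,
      zero_add, one_mul, mul_one, neg_neg, mul_neg, neg_mul] at H ⊢
    rw [key] at H
    rw [integral_neg, sub_neg_eq_add, neg_zero, zero_add, H]
    simp only [map_add, _root_.map_one, ← integral_conj, _root_.map_mul, Complex.conj_ofReal,
      neg_neg]
  · have H := hvolt (-x) (-t) (-k) 1 0
    simp only [Fin.mk_zero, Fin.mk_one, sigma3Conj, Umat, PsiTilde, Lam, LamInv, Matrix.mul_apply, Fin.sum_univ_two,
      Matrix.cons_val_zero, Matrix.cons_val_one, Matrix.head_cons, Matrix.head_fin_const,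
      Matrix.of_apply, Matrix.one_apply, if_true, if_false, zero_mul, mul_zero, add_zero,
      zero_add, one_mul, mul_one, neg_neg, mul_neg, neg_mul, neg_zero] at H ⊢
    rw [key] at H
    have H2 : (starRingEnd ℂ) (Ψ (-x) (-t) (-k) 1 0) = ∫ y in Ici x,
        Complex.exp (2 * (Complex.I * (k : ℂ) * ((y : ℂ) - (x : ℂ)))) *
          ((q y t : ℂ) * (starRingEnd ℂ) (Ψ (-y) (-t) (-k) 0 0)) := by
      rw [H, if_neg (by decide), zero_add, ← integral_conj]
      refine setIntegral_congr_fun measurableSet_Ici fun y _ => ?_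
      simp only [neg_neg, _root_.map_mul, Complex.conj_ofReal, ← Complex.exp_conj, map_neg,
        map_sub, map_ofNat, Complex.conj_I, Complex.ofReal_neg]
      ring_nf
    rw [H2]
    norm_num
  · have H := hvolt (-x) (-t) (-k) 0 1
    simp only [Fin.mk_zero, Fin.mk_one, sigma3Conj, Umat, PsiTilde, Lam, LamInv, Matrix.mul_apply, Fin.sum_univ_two,
      Matrix.cons_val_zero, Matrix.cons_val_one, Matrix.head_cons, Matrix.head_fin_const,
      Matrix.of_apply, Matrix.one_apply, if_true, if_false, zero_mul, mul_zero, add_zero,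
      zero_add, one_mul, mul_one, neg_neg, mul_neg, neg_mul, neg_zero] at H ⊢
    rw [key] at H
    have H2 : (starRingEnd ℂ) (Ψ (-x) (-t) (-k) 0 1) = ∫ y in Ici x,
        Complex.exp (-(2 * (Complex.I * (k : ℂ) * ((y : ℂ) - (x : ℂ))))) *
          ((q (-y) (-t) : ℂ) * (starRingEnd ℂ) (Ψ (-y) (-t) (-k) 1 1)) := by
      rw [H, if_neg (by decide), zero_add, ← integral_conj]
      refine setIntegral_congr_fun measurableSet_Ici fun y _ => ?_
      simp only [neg_neg, _root_.map_mul, Complex.conj_ofReal, ← Complex.exp_conj, map_neg,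
        map_sub, map_ofNat, Complex.conj_I, Complex.ofReal_neg]
      ring_nf
    rw [H2]
    norm_num
  · have H := hvolt (-x) (-t) (-k) 0 0
    simp only [Fin.mk_zero, Fin.mk_one, sigma3Conj, Umat, PsiTilde, Lam, LamInv, Matrix.mul_apply, Fin.sum_univ_two,
      Matrix.cons_val_zero, Matrix.cons_val_one, Matrix.head_cons, Matrix.head_fin_const,
      Matrix.of_apply, Matrix.one_apply, if_true, if_false, zero_mul, mul_zero, add_zero,
      zero_add, one_mul, mul_one, neg_neg, mul_neg, neg_mul] at H ⊢
    rw [key] at H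
    rw [integral_neg, sub_neg_eq_add, H]
    simp only [map_add, _root_.map_one, ← integral_conj, _root_.map_mul, Complex.conj_ofReal,
      neg_neg]
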